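/- Let v ∈ N⊙(P,α) be a non-branching internal node lying on a segment s of the transition tree T of P. Then left(v) is also a node on the segment s. Furthermore, v is a relevant ⊙-transition node unless either (a) v is ⊙-dominated by top(s), or (b) first(right(v)) ⊆ first(top(s)) and top(s) is weakly ⊙-dominated by a ⊙-live node in T. -/
import Mathlib


/-- Non-empty regular expressions over alphabet `α`, identified with their parse trees. -/
inductive RE (α : Type) : Type where
  | eps : RE α
  | ch : α → RE α
  | cat : RE α → RE α → RE α
  | alt : RE α → RE α → RE α
  | star : RE α → RE α

/-- Child directions in the parse tree (a `star`-node only has an `L` child). -/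
inductive Dir : Type where
  | L : Dir
  | R : Dir
  deriving DecidableEq

/-- A node of the parse tree is identified with the path from the root to it. -/
abbrev TreePath : Type := List Dir

namespace RE

variable {α : Type}

/-- The subexpression of `R` rooted at the node reached by following path `v`
(`none` if no such node exists). -/
def sub : RE α → TreePath → Option (RE α)
  | r, [] => some r
  | .cat r _, .L :: p => sub r p
  | .cat _ s, .R :: p => sub s p
  | .alt r _, .L :: p => sub r p
  | .alt _ s, .R :: p => sub s p
  | .star r, .L :: p => sub r p
  | _, _ => none

/-- `v` is a node of the parse tree of `R`. -/
def IsNode (R : RE α) (v : TreePath) : Prop := ∃ r, R.sub v = some r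

/-- The label of a position (character leaf); `none` if `p` is not a position. -/
def labelOf (R : RE α) (p : TreePath) : Option α :=
  match R.sub p with
  | some (.ch a) => some a
  | _ => none

/-- `p` is a position of `R`, i.e. a leaf labeled by a character. -/
def IsPos (R : RE α) (p : TreePath) : Prop := ∃ a, R.labelOf p = some a

/-- `v` is a `⊙`-node (concatenation node). -/
def IsCatNode (R : RE α) (v : TreePath) : Prop := ∃ r s, R.sub v = some (.cat r s)

/-- `v` is a `∗`-node (Kleene-star node). -/
def IsStarNode (R : RE α) (v : TreePath) : Prop := ∃ r, R.sub v = some (.star r)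

/-- `PosSeq r w` holds when `w` is a sequence of (paths to) positions of `r`
whose labels spell some string of `L(r)`. -/
inductive PosSeq : RE α → List TreePath → Prop where
  | eps : PosSeq .eps []
  | ch (a : α) : PosSeq (.ch a) [[]]
  | cat {r s : RE α} {u v : List TreePath} : PosSeq r u → PosSeq s v →
      PosSeq (.cat r s) (u.map (Dir.L :: ·) ++ v.map (Dir.R :: ·))
  | altL {r s : RE α} {u : List TreePath} : PosSeq r u → PosSeq (.alt r s) (u.map (Dir.L :: ·))
  | altR {r s : RE α} {v : List TreePath} : PosSeq s v → PosSeq (.alt r s) (v.map (Dir.R :: ·))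
  | starNil {r : RE α} : PosSeq (.star r) []
  | starCons {r : RE α} {u w : List TreePath} : PosSeq r u → PosSeq (.star r) w →
      PosSeq (.star r) (u.map (Dir.L :: ·) ++ w)

/-- `first(v)`: the positions (as paths in `R`) that occur first in a position
sequence of the subexpression rooted at `v`. -/
def firstSet (R : RE α) (v : TreePath) : Set TreePath :=
  {p | ∃ r, R.sub v = some r ∧ ∃ p' w, PosSeq r (p' :: w) ∧ p = v ++ p'}

/-- `last(v)`: the positions (as paths in `R`) that occur last in a position
sequence of the subexpression rooted at `v`. -/
def lastSet (R : RE α) (v : TreePath) : Set TreePath :=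
  {p | ∃ r, R.sub v = some r ∧ ∃ w p', PosSeq r (w ++ [p']) ∧ p = v ++ p'}

/-- `follow(R,p)`: the positions that can follow `p` in a position sequence of `R`. -/
def followSet (R : RE α) (p : TreePath) : Set TreePath :=
  {q | ∃ w₁ w₂, PosSeq R (w₁ ++ p :: q :: w₂)}

/-- `firstextent(p) = {v : p ∈ first(v)}`. -/
def firstExtent (R : RE α) (p : TreePath) : Set TreePath := {v | p ∈ R.firstSet v}

/-- `lastextent(p) = {v : p ∈ last(v)}`. -/
def lastExtent (R : RE α) (p : TreePath) : Set TreePath := {v | p ∈ R.lastSet v}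

/-- `firstextent(P)` for a set of positions `P`. -/
def firstExtentSet (R : RE α) (P : Set TreePath) : Set TreePath := ⋃ p ∈ P, R.firstExtent p

/-- `lastextent(P)` for a set of positions `P`. -/
def lastExtentSet (R : RE α) (P : Set TreePath) : Set TreePath := ⋃ p ∈ P, R.lastExtent p

end RE

/-- Lowest common ancestor of two nodes = longest common prefix of the paths. -/
def lcaP : TreePath → TreePath → TreePath
  | a :: p, b :: q => if a = b then a :: lcaP p q else []
  | _, _ => []

namespace RE

variable {α : Type}

/-- `u = parent*(v)`: `u` is the lowest ancestor of `v` (possibly `v` itself)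
that is a `∗`-node. -/
def IsLowestStarAnc (R : RE α) (v u : TreePath) : Prop :=
  u <+: v ∧ R.IsStarNode u ∧ ∀ w, w <+: v → R.IsStarNode w → w <+: u

/-- `δ(p,α)`: the `α`-transitions of the position automaton out of position `p`. -/
def delta (R : RE α) (p : TreePath) (a : α) : Set TreePath :=
  {q | R.labelOf q = some a ∧ q ∈ R.followSet p}

/-- `δ(P,α) = ∪_{p ∈ P} δ(p,α)`. -/
def deltaSet (R : RE α) (P : Set TreePath) (a : α) : Set TreePath := ⋃ p ∈ P, R.delta p a

/-- Internal `⊙`-transition: `δ⊙(v,α) = {q ∈ Pos_α : right(v) ∈ firstextent(q)}`. -/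
def deltaOdot (R : RE α) (v : TreePath) (a : α) : Set TreePath :=
  {q | R.labelOf q = some a ∧ q ∈ R.firstSet (v ++ [Dir.R])}

/-- Internal `∗`-transition: `δ∗(v,α) = {q ∈ Pos_α : parent*(v) ∈ firstextent(q)}`. -/
def deltaStar (R : RE α) (v : TreePath) (a : α) : Set TreePath :=
  {q | R.labelOf q = some a ∧ ∃ u, R.IsLowestStarAnc v u ∧ q ∈ R.firstSet u}

/-- `N⊙(P,α)`: the `⊙`-transition nodes. -/
def NOdot (R : RE α) (P : Set TreePath) (a : α) : Set TreePath :=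
  {v | R.IsCatNode v ∧ (v ++ [Dir.L]) ∈ R.lastExtentSet P ∧
    (∃ q, R.labelOf q = some a ∧ q ∈ R.firstSet (v ++ [Dir.R]))}

/-- `N∗(P,α)`: the `∗`-transition nodes. -/
def NStar (R : RE α) (P : Set TreePath) (a : α) : Set TreePath :=
  {u | R.IsStarNode u ∧
    (∃ p ∈ P, ∃ q, R.labelOf q = some a ∧ R.IsLowestStarAnc (lcaP p q) u) ∧
    (∃ p ∈ P, p ∈ R.lastSet u) ∧ (∃ q, R.labelOf q = some a ∧ q ∈ R.firstSet u)}

/-- `u` `∗`-dominates `v`: `u` is a proper ancestor of `v` and `first(v) ⊆ first(u)`. -/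
def StarDom (R : RE α) (u v : TreePath) : Prop :=
  u <+: v ∧ u ≠ v ∧ R.firstSet v ⊆ R.firstSet u

/-- `u` `⊙`-dominates `v`: `u` is a proper ancestor of `v` and
`first(right(v)) ⊆ first(right(u))`. -/
def OdotDom (R : RE α) (u v : TreePath) : Prop :=
  u <+: v ∧ u ≠ v ∧ R.firstSet (v ++ [Dir.R]) ⊆ R.firstSet (u ++ [Dir.R])

/-- `Ñ⊙(P,α)`: the relevant `⊙`-transition nodes. -/
def RelNOdot (R : RE α) (P : Set TreePath) (a : α) : Set TreePath :=
  {v ∈ R.NOdot P a | ∀ u ∈ R.NOdot P a, ¬ R.OdotDom u v}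

/-- `Ñ∗(P,α)`: the relevant `∗`-transition nodes. -/
def RelNStar (R : RE α) (P : Set TreePath) (a : α) : Set TreePath :=
  {v ∈ R.NStar P a | ∀ u ∈ R.NStar P a, ¬ R.StarDom u v}

/-- `v` is a node of the transition tree `T` of `P`: an ancestor of some position of `P`. -/
def InT (R : RE α) (P : Set TreePath) (v : TreePath) : Prop := ∃ p ∈ P, v <+: p

/-- `v` is a branching node of the transition tree of `P`: both children are in `T`. -/
def Branching (R : RE α) (P : Set TreePath) (v : TreePath) : Prop :=
  R.InT P (v ++ [Dir.L]) ∧ R.InT P (v ++ [Dir.R])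

/-- `v` is a leaf of the transition tree of `P`. -/
def LeafT (R : RE α) (P : Set TreePath) (v : TreePath) : Prop :=
  R.InT P v ∧ ∀ d : Dir, ¬ R.InT P (v ++ [d])

/-- `v` is a `⊙`-live node: a `⊙`-node with `left(v) ∈ lastextent(P)`. -/
def OdotLive (R : RE α) (P : Set TreePath) (v : TreePath) : Prop :=
  R.IsCatNode v ∧ (v ++ [Dir.L]) ∈ R.lastExtentSet P

/-- `v` is weakly `⊙`-dominated by `u`: `u` is `⊙`-live, a proper ancestor of `v`,
and `first(v) ⊆ first(right(u))`. -/
def WeakOdotDom (R : RE α) (P : Set TreePath) (u v : TreePath) : Prop :=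
  R.OdotLive P u ∧ u <+: v ∧ u ≠ v ∧ R.firstSet v ⊆ R.firstSet (u ++ [Dir.R])

/-- The pair `(t, b)` delimits a segment of the transition tree of `P`: a path from a
leaf or branching node `b` up to the nearest branching node `t` strictly above it
(or to the root if there is none). -/
def IsSegment (R : RE α) (P : Set TreePath) (t b : TreePath) : Prop :=
  R.InT P b ∧ t <+: b ∧ t ≠ b ∧
  (R.LeafT P b ∨ R.Branching P b) ∧
  (R.Branching P t ∨ t = []) ∧
  (∀ w, t <+: w → w <+: b → w ≠ t → w ≠ b → ¬ R.Branching P w)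

/-- The language `L(R)`. -/
def lang : RE α → Set (List α)
  | .eps => {[]}
  | .ch a => {[a]}
  | .cat r s => {w | ∃ u ∈ lang r, ∃ v ∈ lang s, w = u ++ v}
  | .alt r s => lang r ∪ lang s
  | .star r => {w | ∃ l : List (List α), (∀ u ∈ l, u ∈ lang r) ∧ w = l.flatten}

/-- The position automaton (Glushkov automaton) of `R`: states are the positions of `R`
plus a start state `none`; for `q ∈ first(R)` there is a transition `(p₀, q, label(q))`,
and for `q ∈ follow(R,p)` a transition `(p, q, label(q))`; accepting states are
`last(R)`, together with `p₀` if `ε ∈ L(R)`. -/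
def posNFA (R : RE α) : NFA α (Option TreePath) where
  step := fun s a =>
    {t | ∃ q : TreePath, t = some q ∧ R.labelOf q = some a ∧
      ((s = none ∧ q ∈ R.firstSet []) ∨ (∃ p, s = some p ∧ q ∈ R.followSet p))}
  start := {none}
  accept := {t | (∃ p, t = some p ∧ p ∈ R.lastSet []) ∨ (t = none ∧ [] ∈ R.lang)}

end RE

namespace SegAux
open RE

variable {α : Type}

lemma sub_append (R : RE α) (x y : TreePath) :
    R.sub (x ++ y) = (R.sub x).bind (fun r => r.sub y) := by
  induction x generalizing R with
  | nil => simp [RE.sub]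
  | cons d x ih =>
    cases R with
    | eps => cases d <;> simp [RE.sub]
    | ch a => cases d <;> simp [RE.sub]
    | cat r s => cases d <;> simp [RE.sub, ih]
    | alt r s => cases d <;> simp [RE.sub, ih]
    | star r => cases d <;> simp [RE.sub, ih]

lemma star_head : ∀ {e : RE α} {l : List TreePath}, PosSeq e l → ∀ (r : RE α) (p : TreePath)
    (ws : List TreePath), e = .star r → l = (Dir.L :: p) :: ws → ∃ ws', PosSeq r (p :: ws') := by
  intro e l h
  induction h with
  | eps => intro r p ws he hl; cases he
  | ch a => intro r p ws he hl; cases he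
  | cat hu hv => intro r p ws he hl; cases he
  | altL hu => intro r p ws he hl; cases he
  | altR hv => intro r p ws he hl; cases he
  | starNil => intro r p ws he hl; cases hl
  | starCons hu hw ihu ihw =>
    intro r p ws he hl
    rename_i r0 u w
    injection he with he
    subst he
    cases u with
    | nil => exact ihw _ p ws rfl (by simpa using hl)
    | cons p0 u' =>
      simp only [List.map_cons, List.cons_append, List.cons.injEq] at hl
      obtain ⟨⟨_, rfl⟩, _⟩ := hl
      exact ⟨u', hu⟩

lemma step_lemma {r r' : RE α} {d : Dir} (h : r.sub [d] = some r')
    {p : TreePath} {ws : List TreePath} (hps : PosSeq r ((d :: p) :: ws)) :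
    (∃ ws', PosSeq r' (p :: ws')) ∧
    (∀ q qs, PosSeq r' (q :: qs) → ∃ qs', PosSeq r ((d :: q) :: qs')) := by
  cases r with
  | eps => cases d <;> simp [RE.sub] at h
  | ch a => cases d <;> simp [RE.sub] at h
  | cat r s =>
    generalize hl : (d :: p) :: ws = l at hps
    cases hps with
    | cat hu hv =>
      rename_i u vv
      cases d with
      | L =>
        have hr : r' = r := by simpa [RE.sub] using h.symm
        subst hr
        cases u with
        | nil =>
          cases vv with
          | nil => simp at hl
          | cons v0 vv' => simp at hl
        | cons p0 u' =>
          simp only [List.map_cons, List.cons_append, List.cons.injEq] at hl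
          obtain ⟨⟨_, rfl⟩, rfl⟩ := hl
          refine ⟨⟨u', hu⟩, fun q qs hq => ?_⟩
          exact ⟨qs.map (Dir.L :: ·) ++ vv.map (Dir.R :: ·), PosSeq.cat hq hv⟩
      | R =>
        have hr : r' = s := by simpa [RE.sub] using h.symm
        subst hr
        cases u with
        | cons p0 u' => simp at hl
        | nil =>
          cases vv with
          | nil => simp at hl
          | cons v0 vv' =>
            simp only [List.map_nil, List.nil_append, List.map_cons,
              List.cons.injEq] at hl
            obtain ⟨⟨_, rfl⟩, rfl⟩ := hl
            refine ⟨⟨vv', hv⟩, fun q qs hq => ?_⟩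
            exact ⟨qs.map (Dir.R :: ·), PosSeq.cat (u := []) hu hq⟩
  | alt r s =>
    generalize hl : (d :: p) :: ws = l at hps
    cases hps with
    | altL hu =>
      rename_i u
      cases d with
      | R =>
        cases u with
        | nil => simp at hl
        | cons p0 u' => simp at hl
      | L =>
        have hr : r' = r := by simpa [RE.sub] using h.symm
        subst hr
        cases u with
        | nil => simp at hl
        | cons p0 u' =>
          simp only [List.map_cons, List.cons.injEq] at hl
          obtain ⟨⟨_, rfl⟩, rfl⟩ := hl
          exact ⟨⟨u', hu⟩, fun q qs hq => ⟨qs.map (Dir.L :: ·), PosSeq.altL hq⟩⟩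
    | altR hv =>
      rename_i vv
      cases d with
      | L =>
        cases vv with
        | nil => simp at hl
        | cons p0 v' => simp at hl
      | R =>
        have hr : r' = s := by simpa [RE.sub] using h.symm
        subst hr
        cases vv with
        | nil => simp at hl
        | cons p0 v' =>
          simp only [List.map_cons, List.cons.injEq] at hl
          obtain ⟨⟨_, rfl⟩, rfl⟩ := hl
          exact ⟨⟨v', hv⟩, fun q qs hq => ⟨qs.map (Dir.R :: ·), PosSeq.altR hq⟩⟩
  | star r =>
    cases d with
    | R => simp [RE.sub] at h
    | L =>
      have hr : r' = r := by simpa [RE.sub] using h.symm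
      subst hr
      refine ⟨star_head hps _ p ws rfl rfl, fun q qs hq => ?_⟩
      exact ⟨qs.map (Dir.L :: ·), by simpa using PosSeq.starCons hq PosSeq.starNil⟩

lemma path_lemma : ∀ (c : TreePath) (r r' : RE α), r.sub c = some r' →
    ∀ p ws, PosSeq r ((c ++ p) :: ws) →
    (∃ ws', PosSeq r' (p :: ws')) ∧
    (∀ q qs, PosSeq r' (q :: qs) → ∃ qs', PosSeq r ((c ++ q) :: qs')) := by
  intro c
  induction c with
  | nil =>
    intro r r' h p ws hps
    simp only [RE.sub, Option.some.injEq] at h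
    subst h
    exact ⟨⟨ws, hps⟩, fun q qs hq => ⟨qs, hq⟩⟩
  | cons d c ih =>
    intro r r' h p ws hps
    have h' : (r.sub [d]).bind (fun r1 => r1.sub c) = some r' := by
      rw [← sub_append]; exact h
    obtain ⟨r1, h1, h2⟩ : ∃ r1, r.sub [d] = some r1 ∧ r1.sub c = some r' := by
      cases hr : r.sub [d] with
      | none => rw [hr] at h'; cases h'
      | some r1 => rw [hr] at h'; exact ⟨r1, rfl, h'⟩
    have hps' : PosSeq r ((d :: (c ++ p)) :: ws) := hps
    obtain ⟨⟨ws1, hws1⟩, hlift⟩ := step_lemma h1 hps'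
    obtain ⟨hi, hii⟩ := ih r1 r' h2 p ws1 hws1
    refine ⟨hi, fun q qs hq => ?_⟩
    obtain ⟨qs1, hqs1⟩ := hii q qs hq
    obtain ⟨qs', hqs'⟩ := hlift (c ++ q) qs1 hqs1
    exact ⟨qs', hqs'⟩

lemma first_both {R : RE α} {w t q : TreePath} (hnode : R.IsNode t)
    (hwt : w <+: t) (htq : t <+: q) (hq : q ∈ R.firstSet w) :
    q ∈ R.firstSet t ∧ R.firstSet t ⊆ R.firstSet w := by
  obtain ⟨rw, hsw, p', ws, hps, hqeq⟩ := hq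
  obtain ⟨rt, hst⟩ := hnode
  obtain ⟨c, rfl⟩ := hwt
  obtain ⟨s, hs⟩ := htq
  have hp' : p' = c ++ s := by
    apply List.append_cancel_left (as := w)
    rw [← hqeq, ← hs, List.append_assoc]
  subst hp'
  have hsub : rw.sub c = some rt := by
    have h2 := sub_append R w c
    rw [hst, hsw] at h2
    simpa using h2.symm
  obtain ⟨hi, hii⟩ := path_lemma c rw rt hsub s ws hps
  constructor
  · obtain ⟨ws', hws'⟩ := hi
    exact ⟨rt, hst, s, ws', hws', by rw [hqeq, List.append_assoc]⟩
  · intro x hx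
    obtain ⟨rt', hst', q'', qs, hq'', hxeq⟩ := hx
    rw [hst] at hst'
    injection hst' with e
    subst e
    obtain ⟨qs', hqs'⟩ := hii q'' qs hq''
    exact ⟨rw, hsw, c ++ q'', qs', hqs', by rw [hxeq, List.append_assoc]⟩

lemma prefix_dir {u t q : TreePath} (hut : u <+: t) (hne : u ≠ t) (htq : t <+: q)
    (hq : (u ++ [Dir.R]) <+: q) : (u ++ [Dir.R]) <+: t := by
  obtain ⟨t1, rfl⟩ := hut
  cases t1 with
  | nil => simp at hne
  | cons d t2 =>
    obtain ⟨s, hs⟩ := htq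
    obtain ⟨s', hs'⟩ := hq
    have hd : d :: (t2 ++ s) = Dir.R :: s' := by
      apply List.append_cancel_left (as := u)
      simp only [List.append_assoc] at hs hs'
      exact hs.trans hs'.symm
    obtain ⟨rfl, -⟩ : d = Dir.R ∧ t2 ++ s = s' := by
      injection hd with h1 h2; exact ⟨h1, h2⟩
    exact ⟨t2, by simp⟩

lemma isNode_prefix {R : RE α} {x y : TreePath} (h : R.IsNode (x ++ y)) : R.IsNode x := by
  obtain ⟨r, hr⟩ := h
  rw [sub_append] at hr
  cases hx : R.sub x with
  | none => rw [hx] at hr; cases hr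
  | some r1 => exact ⟨r1, hx⟩

lemma lastE_InT {R : RE α} {P : Set TreePath} {x : TreePath}
    (h : x ∈ R.lastExtentSet P) : R.InT P x := by
  simp only [RE.lastExtentSet, Set.mem_iUnion] at h
  obtain ⟨p, hp, hx⟩ := h
  obtain ⟨rl, -, w, p', -, hpe⟩ := hx
  exact ⟨p, hp, ⟨p', hpe.symm⟩⟩

lemma firstSet_pref {R : RE α} {w q : TreePath} (h : q ∈ R.firstSet w) : w <+: q := by
  obtain ⟨r, -, p', ws, -, hq⟩ := h
  exact ⟨p', hq.symm⟩

end SegAux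

/-- Let `v ∈ N⊙(P,α)` be a non-branching internal node lying (strictly) on a segment
`s` of the transition tree `T` of `P` with top node `t` and bottom node `b`. Then
`left(v)` is also a node on the segment `s`; furthermore `v` is a relevant
`⊙`-transition node unless either (a) `v` is `⊙`-dominated by `top(s) = t`, or (b)
`first(right(v)) ⊆ first(top(s))` and `top(s)` is weakly `⊙`-dominated by a `⊙`-live
node in `T`. -/
theorem segment_internal_node_relevant {α : Type} (R : RE α) (P : Set TreePath)
    (a : α) (hP : ∀ p ∈ P, R.IsPos p) (t b v : TreePath)
    (hseg : R.IsSegment P t b) (hv : v ∈ R.NOdot P a)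
    (htv : t <+: v) (hvb : v <+: b) (hvt : v ≠ t) (hvb' : v ≠ b) :
    (v ++ [Dir.L]) <+: b ∧
    (v ∈ R.RelNOdot P a ∨ R.OdotDom t v ∨
      (R.firstSet (v ++ [Dir.R]) ⊆ R.firstSet t ∧
        ∃ u, R.InT P u ∧ R.WeakOdotDom P u t)) := by
  obtain ⟨hbT, htb, htnb, hbleaf, htbr, hnobranch⟩ := hseg
  have hv' := hv
  obtain ⟨hcat, hlastE, q, hqa, hqf⟩ := hv'
  have hvlT : R.InT P (v ++ [Dir.L]) := SegAux.lastE_InT hlastE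
  obtain ⟨pb, hpb, hbpb⟩ := hbT
  have hvRq : (v ++ [Dir.R]) <+: q := SegAux.firstSet_pref hqf
  have hvq : v <+: q := (List.prefix_append v [Dir.R]).trans hvRq
  have h1 : (v ++ [Dir.L]) <+: b := by
    obtain ⟨b1, hb1⟩ := hvb
    cases b1 with
    | nil => exact absurd (by simpa using hb1) hvb'
    | cons d b2 =>
      cases d with
      | L => exact ⟨b2, by simpa using hb1⟩
      | R =>
        exfalso
        apply hnobranch v htv ⟨Dir.R :: b2, hb1⟩ hvt hvb'
        refine ⟨hvlT, ⟨pb, hpb, ?_⟩⟩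
        have hpref : (v ++ [Dir.R]) <+: b := ⟨b2, by simpa using hb1⟩
        exact hpref.trans hbpb
  refine ⟨h1, ?_⟩
  by_cases hrel : v ∈ R.RelNOdot P a
  · exact Or.inl hrel
  have hex : ∃ u ∈ R.NOdot P a, R.OdotDom u v := by
    by_contra hno
    push_neg at hno
    exact hrel ⟨hv, fun u hu => hno u hu⟩
  obtain ⟨u, huN, huv, hune, hdom⟩ := hex
  obtain ⟨hucat, hulast, -⟩ := huN
  have hq_u : q ∈ R.firstSet (u ++ [Dir.R]) := hdom hqf
  have hqu_pref : (u ++ [Dir.R]) <+: q := SegAux.firstSet_pref hq_u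
  by_cases heq : u = t
  · exact Or.inr (Or.inl (by rw [← heq]; exact ⟨huv, hune, hdom⟩))
  rcases List.prefix_or_prefix_of_prefix huv htv with hut | htu
  · -- u is a strict ancestor of t : case (b)
    have htq : t <+: q := htv.trans hvq
    have huRt : (u ++ [Dir.R]) <+: t := SegAux.prefix_dir hut heq htq hqu_pref
    have hnodet : R.IsNode t := by
      obtain ⟨c, rfl⟩ := htv
      obtain ⟨r1, r2, hsubv⟩ := hcat
      exact SegAux.isNode_prefix ⟨_, hsubv⟩
    have hsub_vt : R.firstSet (v ++ [Dir.R]) ⊆ R.firstSet t := by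
      intro x hx
      have hxu := hdom hx
      have htx : t <+: x :=
        htv.trans ((List.prefix_append v [Dir.R]).trans (SegAux.firstSet_pref hx))
      exact (SegAux.first_both hnodet huRt htx hxu).1
    have hts : R.firstSet t ⊆ R.firstSet (u ++ [Dir.R]) :=
      (SegAux.first_both hnodet huRt htq hq_u).2
    have huT : R.InT P u := ⟨pb, hpb, (hut.trans (htv.trans hvb)).trans hbpb⟩
    exact Or.inr (Or.inr ⟨hsub_vt, u, huT, ⟨hucat, hulast⟩, hut, heq, hts⟩)
  · -- t is a strict ancestor of u : impossible (u would be branching in the segment)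
    exfalso
    have huRv : (u ++ [Dir.R]) <+: v := SegAux.prefix_dir huv hune hvq hqu_pref
    have hub : u <+: b := huv.trans hvb
    have hunb : u ≠ b := by
      rintro rfl
      exact hune (huv.eq_of_length (huv.length_le.antisymm hvb.length_le))
    apply hnobranch u htu hub heq hunb
    exact ⟨SegAux.lastE_InT hulast, ⟨pb, hpb, (huRv.trans hvb).trans hbpb⟩⟩
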